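/- Let f : [0,∞) → ℝᵖ with f(t) = C e^{tA} x₀, and suppose (C,A) is observable and x₀ together with the vectors A^k x₀ span ℝⁿ (span-reachability from the single initial state x₀). If also f(t) = C' e^{tA'} x₀' with (C', A') observable and span-reachable from x₀', with state dimension n', then n = n' and there exists an invertible matrix T ∈ ℝ^{n×n} with A' = T A T⁻¹, C' = C T⁻¹, x₀' = T x₀. -/

import Mathlib

open Matrix

attribute [local instance] Matrix.linftyOpNormedRing Matrix.linftyOpNormedAlgebra

/-- The linear map `M ↦ C *ᵥ (M *ᵥ v)` on square matrices. -/
private def evLin {p n : ℕ} (C : Matrix (Fin p) (Fin n) ℝ) (v : Fin n → ℝ) :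
    Matrix (Fin n) (Fin n) ℝ →ₗ[ℝ] (Fin p → ℝ) where
  toFun M := C.mulVec (M.mulVec v)
  map_add' M N := by simp [Matrix.add_mulVec, Matrix.mulVec_add]
  map_smul' c M := by simp [Matrix.smul_mulVec, Matrix.mulVec_smul]

private lemma hasDeriv_aux {p n : ℕ} (A : Matrix (Fin n) (Fin n) ℝ)
    (C : Matrix (Fin p) (Fin n) ℝ) (v : Fin n → ℝ) (t : ℝ) :
    HasDerivAt (fun s : ℝ => C.mulVec ((NormedSpace.exp (s • A)).mulVec v))
      (C.mulVec ((NormedSpace.exp (t • A)).mulVec (A.mulVec v))) t := by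
  have h := hasDerivAt_exp_smul_const (𝕂 := ℝ) A t
  have hL := ((evLin C v).toContinuousLinearMap.hasFDerivAt).comp_hasDerivAt t h
  have : (evLin C v).toContinuousLinearMap (NormedSpace.exp (t • A) * A)
      = C.mulVec ((NormedSpace.exp (t • A)).mulVec (A.mulVec v)) := by
    simp [evLin, LinearMap.coe_toContinuousLinearMap', Matrix.mulVec_mulVec]
  exact hL.congr_deriv this

/-- The observation map `v ↦ (k ↦ C *ᵥ (A^k *ᵥ v))`. -/
private def obsL {p n : ℕ} (A : Matrix (Fin n) (Fin n) ℝ) (C : Matrix (Fin p) (Fin n) ℝ) :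
    (Fin n → ℝ) →ₗ[ℝ] (ℕ → Fin p → ℝ) where
  toFun v k := C.mulVec ((A ^ k).mulVec v)
  map_add' u v := by funext k; simp [Matrix.mulVec_add]
  map_smul' c v := by funext k; simp [Matrix.mulVec_smul]

private lemma matrix_ext_mulVec {m n : ℕ} {M N : Matrix (Fin m) (Fin n) ℝ}
    (h : ∀ v, M.mulVec v = N.mulVec v) : M = N := by
  have : Matrix.toLin' M = Matrix.toLin' N :=
    LinearMap.ext fun v => by simpa [Matrix.toLin'_apply] using h v
  exact Matrix.toLin'.injective this

theorem stmt_13 {p n n' : ℕ}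
    (A : Matrix (Fin n) (Fin n) ℝ) (C : Matrix (Fin p) (Fin n) ℝ) (x₀ : Fin n → ℝ)
    (A' : Matrix (Fin n') (Fin n') ℝ) (C' : Matrix (Fin p) (Fin n') ℝ) (x₀' : Fin n' → ℝ)
    (hobs : ∀ v : Fin n → ℝ, (∀ k < n, C.mulVec ((A ^ k).mulVec v) = 0) → v = 0)
    (hreach : Submodule.span ℝ {y : Fin n → ℝ | ∃ k : ℕ, y = (A ^ k).mulVec x₀} = ⊤)
    (hobs' : ∀ v : Fin n' → ℝ, (∀ k < n', C'.mulVec ((A' ^ k).mulVec v) = 0) → v = 0)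
    (hreach' : Submodule.span ℝ {y : Fin n' → ℝ | ∃ k : ℕ, y = (A' ^ k).mulVec x₀'} = ⊤)
    (heq : ∀ t : ℝ, 0 ≤ t →
      C.mulVec ((NormedSpace.exp (t • A)).mulVec x₀)
        = C'.mulVec ((NormedSpace.exp (t • A')).mulVec x₀')) :
    n = n' ∧ ∃ (T : Matrix (Fin n') (Fin n) ℝ) (S : Matrix (Fin n) (Fin n') ℝ),
      T * S = 1 ∧ S * T = 1 ∧ A' * T = T * A ∧ C' * T = C ∧ T.mulVec x₀ = x₀' := by
  classical
  -- Step 1: moments equality for all k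
  have hexpEq : ∀ k : ℕ, Set.EqOn
      (fun t : ℝ => C.mulVec ((NormedSpace.exp (t • A)).mulVec ((A ^ k).mulVec x₀)))
      (fun t : ℝ => C'.mulVec ((NormedSpace.exp (t • A')).mulVec ((A' ^ k).mulVec x₀')))
      (Set.Ici (0 : ℝ)) := by
    intro k
    induction k with
    | zero =>
      intro t ht
      simpa [Matrix.one_mulVec] using heq t ht
    | succ k ih =>
      have hIoi : Set.EqOn
          (fun t : ℝ => C.mulVec ((NormedSpace.exp (t • A)).mulVec ((A ^ (k+1)).mulVec x₀)))
          (fun t : ℝ => C'.mulVec ((NormedSpace.exp (t • A')).mulVec ((A' ^ (k+1)).mulVec x₀')))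
          (Set.Ioi (0 : ℝ)) := by
        intro t ht
        have hF := hasDeriv_aux A C ((A ^ k).mulVec x₀) t
        have hG := hasDeriv_aux A' C' ((A' ^ k).mulVec x₀') t
        have hmem : Set.Ioi (0:ℝ) ∈ nhds t := (isOpen_Ioi).mem_nhds ht
        have hEv : (fun s : ℝ => C'.mulVec ((NormedSpace.exp (s • A')).mulVec
              ((A' ^ k).mulVec x₀')))
            =ᶠ[nhds t] (fun s : ℝ => C.mulVec ((NormedSpace.exp (s • A)).mulVec
              ((A ^ k).mulVec x₀))) := by
          filter_upwards [hmem] with s hs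
          exact (ih (Set.mem_Ici.mpr (le_of_lt (Set.mem_Ioi.mp hs)))).symm
        have hF' := hG.congr_of_eventuallyEq hEv.symm
        have huniq := hF.unique hF'
        have e1 : (A'.mulVec ((A' ^ k).mulVec x₀')) = (A' ^ (k+1)).mulVec x₀' := by
          rw [Matrix.mulVec_mulVec, ← pow_succ']
        have e2 : (A.mulVec ((A ^ k).mulVec x₀)) = (A ^ (k+1)).mulVec x₀ := by
          rw [Matrix.mulVec_mulVec, ← pow_succ']
        simp only [← e1, ← e2]
        exact huniq.symm ▸ rfl
      have hcF : Continuous (fun t : ℝ =>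
          C.mulVec ((NormedSpace.exp (t • A)).mulVec ((A ^ (k+1)).mulVec x₀))) := by
        rw [continuous_iff_continuousAt]
        intro t
        exact (hasDeriv_aux A C _ t).continuousAt
      have hcG : Continuous (fun t : ℝ =>
          C'.mulVec ((NormedSpace.exp (t • A')).mulVec ((A' ^ (k+1)).mulVec x₀'))) := by
        rw [continuous_iff_continuousAt]
        intro t
        exact (hasDeriv_aux A' C' _ t).continuousAt
      have := (hIoi.closure hcF hcG)
      rwa [closure_Ioi] at this
  have hm : ∀ k : ℕ, C.mulVec ((A ^ k).mulVec x₀) = C'.mulVec ((A' ^ k).mulVec x₀') := by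
    intro k
    have := hexpEq k (Set.self_mem_Ici (a := (0:ℝ)))
    simpa [NormedSpace.exp_zero, Matrix.one_mulVec] using this
  -- Step 2: observation maps
  set O : (Fin n → ℝ) →ₗ[ℝ] (ℕ → Fin p → ℝ) := obsL A C with hOdef
  set O' : (Fin n' → ℝ) →ₗ[ℝ] (ℕ → Fin p → ℝ) := obsL A' C' with hO'def
  have hOapp : ∀ v k, O v k = C.mulVec ((A ^ k).mulVec v) := fun _ _ => rfl
  have hO'app : ∀ v k, O' v k = C'.mulVec ((A' ^ k).mulVec v) := fun _ _ => rfl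
  have hOinj : Function.Injective O := by
    rw [← LinearMap.ker_eq_bot, LinearMap.ker_eq_bot']
    intro v hv
    exact hobs v fun k _ => congrFun hv k
  have hO'inj : Function.Injective O' := by
    rw [← LinearMap.ker_eq_bot, LinearMap.ker_eq_bot']
    intro v hv
    exact hobs' v fun k _ => congrFun hv k
  -- key identity on generators
  have hgen : ∀ k : ℕ, O ((A ^ k).mulVec x₀) = O' ((A' ^ k).mulVec x₀') := by
    intro k
    funext j
    rw [hOapp, hO'app, Matrix.mulVec_mulVec x₀ (A ^ j) (A ^ k), ← pow_add,
      Matrix.mulVec_mulVec x₀' (A' ^ j) (A' ^ k), ← pow_add]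
    exact hm (j + k)
  have hgen' : ∀ k : ℕ, O' ((A' ^ k).mulVec x₀') = O ((A ^ k).mulVec x₀) :=
    fun k => (hgen k).symm
  -- ranges
  have hrange : ∀ v, O v ∈ LinearMap.range O' := by
    intro v
    have hv : v ∈ Submodule.span ℝ {y : Fin n → ℝ | ∃ k : ℕ, y = (A ^ k).mulVec x₀} := by
      rw [hreach]; trivial
    have : O v ∈ Submodule.map O (Submodule.span ℝ
        {y : Fin n → ℝ | ∃ k : ℕ, y = (A ^ k).mulVec x₀}) :=
      Submodule.mem_map_of_mem hv
    rw [Submodule.map_span] at this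
    refine Submodule.span_le.mpr ?_ this
    rintro y ⟨z, ⟨k, rfl⟩, rfl⟩
    exact ⟨(A' ^ k).mulVec x₀', (hgen k).symm⟩
  have hrange' : ∀ v, O' v ∈ LinearMap.range O := by
    intro v
    have hv : v ∈ Submodule.span ℝ {y : Fin n' → ℝ | ∃ k : ℕ, y = (A' ^ k).mulVec x₀'} := by
      rw [hreach']; trivial
    have : O' v ∈ Submodule.map O' (Submodule.span ℝ
        {y : Fin n' → ℝ | ∃ k : ℕ, y = (A' ^ k).mulVec x₀'}) :=
      Submodule.mem_map_of_mem hv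
    rw [Submodule.map_span] at this
    refine Submodule.span_le.mpr ?_ this
    rintro y ⟨z, ⟨k, rfl⟩, rfl⟩
    exact ⟨(A ^ k).mulVec x₀, hgen k⟩
  -- Step 3: construct T and S
  let eO' : (Fin n' → ℝ) ≃ₗ[ℝ] LinearMap.range O' := LinearEquiv.ofInjective O' hO'inj
  let eO : (Fin n → ℝ) ≃ₗ[ℝ] LinearMap.range O := LinearEquiv.ofInjective O hOinj
  let Tlin : (Fin n → ℝ) →ₗ[ℝ] (Fin n' → ℝ) :=
    eO'.symm.toLinearMap ∘ₗ (O.codRestrict (LinearMap.range O') hrange)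
  let Slin : (Fin n' → ℝ) →ₗ[ℝ] (Fin n → ℝ) :=
    eO.symm.toLinearMap ∘ₗ (O'.codRestrict (LinearMap.range O) hrange')
  have hOT : ∀ v, O' (Tlin v) = O v := by
    intro v
    have : eO' (Tlin v) = ⟨O v, hrange v⟩ := by
      simp [Tlin, LinearEquiv.apply_symm_apply]
      rfl
    have h2 := congrArg Subtype.val this
    simpa [eO'] using h2
  have hOS : ∀ v, O (Slin v) = O' v := by
    intro v
    have : eO (Slin v) = ⟨O' v, hrange' v⟩ := by
      simp [Slin, LinearEquiv.apply_symm_apply]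
      rfl
    have h2 := congrArg Subtype.val this
    simpa [eO] using h2
  have hST : ∀ v, Slin (Tlin v) = v := by
    intro v; apply hOinj; rw [hOS, hOT]
  have hTS : ∀ v, Tlin (Slin v) = v := by
    intro v; apply hO'inj; rw [hOT, hOS]
  -- n = n'
  have hnn' : n = n' := by
    have e : (Fin n → ℝ) ≃ₗ[ℝ] (Fin n' → ℝ) :=
      LinearEquiv.ofLinear Tlin Slin (LinearMap.ext hTS) (LinearMap.ext hST)
    have := e.finrank_eq
    rwa [Module.finrank_fin_fun, Module.finrank_fin_fun] at this
  -- matrices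
  let Tm : Matrix (Fin n') (Fin n) ℝ := LinearMap.toMatrix' Tlin
  let Sm : Matrix (Fin n) (Fin n') ℝ := LinearMap.toMatrix' Slin
  have hTmv : ∀ v, Tm.mulVec v = Tlin v := fun v => by
    rw [← Matrix.toLin'_apply, Matrix.toLin'_toMatrix']
  have hSmv : ∀ v, Sm.mulVec v = Slin v := fun v => by
    rw [← Matrix.toLin'_apply, Matrix.toLin'_toMatrix']
  refine ⟨hnn', Tm, Sm, ?_, ?_, ?_, ?_, ?_⟩
  · apply matrix_ext_mulVec
    intro v
    rw [← Matrix.mulVec_mulVec, hSmv, hTmv, hTS, Matrix.one_mulVec]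
  · apply matrix_ext_mulVec
    intro v
    rw [← Matrix.mulVec_mulVec, hTmv, hSmv, hST, Matrix.one_mulVec]
  · -- A' * T = T * A
    apply matrix_ext_mulVec
    intro v
    rw [← Matrix.mulVec_mulVec, ← Matrix.mulVec_mulVec, hTmv, hTmv]
    apply hO'inj
    funext j
    have h1 : O' (A'.mulVec (Tlin v)) j = O' (Tlin v) (j + 1) := by
      rw [hO'app, hO'app, Matrix.mulVec_mulVec (Tlin v) (A' ^ j) A', ← pow_succ]
    have h2 : O (A.mulVec v) j = O v (j + 1) := by
      rw [hOapp, hOapp, Matrix.mulVec_mulVec v (A ^ j) A, ← pow_succ]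
    rw [h1, hOT, hOT, ← h2]
  · -- C' * T = C
    apply matrix_ext_mulVec
    intro v
    rw [← Matrix.mulVec_mulVec, hTmv]
    have := congrFun (hOT v) 0
    simpa [hO'app, hOapp, Matrix.one_mulVec] using this
  · rw [hTmv]
    apply hO'inj
    rw [hOT]
    funext j
    rw [hOapp, hO'app]
    exact hm j
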